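/- Let ℋ = ℂ²⊗ℂ²⊗ℂ²⊗ℂ² with the action of Ĝ = SL(2,ℂ)⁴, and let u₁ = e₀₀₀₀+e₁₁₁₁, u₂ = e₀₁₁₀+e₁₀₀₁, u₃ = e₀₁₀₁+e₁₀₁₀, u₄ = e₀₀₁₁+e₁₁₀₀. Let λ₁, λ₂, λ₃, λ₄ ∈ ℂ with λ_i ≠ 0 for all i and λ₁ ∉ {±λ₂±λ₃±λ₄} (all four sign choices). Then the stabiliser in Ĝ of s = λ₁u₁+λ₂u₂+λ₃u₃+λ₄u₄ equals the subgroup of Ĝ generated by the four elements (J,J,J,J), (−I,−I,I,I), (−I,I,−I,I), (K,K,K,K), and this subgroup is finite of order 32. -/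

import Mathlib

/-- The Hilbert space of four qubits, in coordinates with respect to the basis
`e_{i₁i₂i₃i₄} = e_{i₁} ⊗ e_{i₂} ⊗ e_{i₃} ⊗ e_{i₄}` of `ℂ² ⊗ ℂ² ⊗ ℂ² ⊗ ℂ²`. -/
abbrev H4 : Type := Fin 2 → Fin 2 → Fin 2 → Fin 2 → ℂ

abbrev SL2 := Matrix.SpecialLinearGroup (Fin 2) ℂ

/-- The group `Ĝ = SL(2,ℂ)⁴`. -/
abbrev G4 := SL2 × SL2 × SL2 × SL2

/-- The action of `SL(2,ℂ)⁴` on `ℂ² ⊗ ℂ² ⊗ ℂ² ⊗ ℂ²`, given in coordinates: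
it is the linear extension of `(A,B,C,D)·(v₁⊗v₂⊗v₃⊗v₄) = Av₁⊗Bv₂⊗Cv₃⊗Dv₄`. -/
noncomputable def act (g : G4) (x : H4) : H4 := fun i1 i2 i3 i4 =>
  ∑ j1 : Fin 2, ∑ j2 : Fin 2, ∑ j3 : Fin 2, ∑ j4 : Fin 2,
    g.1 i1 j1 * g.2.1 i2 j2 * g.2.2.1 i3 j3 * g.2.2.2 i4 j4 * x j1 j2 j3 j4

/-- The basis vector `e_{i₁i₂i₃i₄}`. -/
def e (i1 i2 i3 i4 : Fin 2) : H4 := fun j1 j2 j3 j4 =>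
  if j1 = i1 ∧ j2 = i2 ∧ j3 = i3 ∧ j4 = i4 then 1 else 0

noncomputable def u1 : H4 := e 0 0 0 0 + e 1 1 1 1
noncomputable def u2 : H4 := e 0 1 1 0 + e 1 0 0 1
noncomputable def u3 : H4 := e 0 1 0 1 + e 1 0 1 0
noncomputable def u4 : H4 := e 0 0 1 1 + e 1 1 0 0

noncomputable def Jm : SL2 := ⟨!![0, 1; -1, 0], by norm_num [Matrix.det_fin_two_of]⟩
noncomputable def Km : SL2 := ⟨!![0, Complex.I; Complex.I, 0], by
  norm_num [Matrix.det_fin_two_of, Complex.I_mul_I]⟩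
noncomputable def negI : SL2 := ⟨!![-1, 0; 0, -1], by norm_num [Matrix.det_fin_two_of]⟩

/- ======================== Auxiliary development ======================== -/

open Matrix Kronecker Complex

abbrev M2 := Matrix (Fin 2) (Fin 2) ℂ
abbrev M4 := Matrix (Fin 2 × Fin 2) (Fin 2 × Fin 2) ℂ

def toMat (x : H4) : M4 := Matrix.of fun i j => x i.1 i.2 j.1 j.2

theorem toMat_inj {x y : H4} (h : toMat x = toMat y) : x = y := by
  funext i1 i2 i3 i4
  exact congrFun (congrFun h (i1,i2)) (i3,i4)

theorem L_act (g : G4) (x : H4) :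
    toMat (act g x) =
      ((g.1 : M2) ⊗ₖ (g.2.1 : M2)) * toMat x * ((g.2.2.1 : M2) ⊗ₖ (g.2.2.2 : M2))ᵀ := by
  ext ⟨i1,i2⟩ ⟨i3,i4⟩
  simp [toMat, act, Matrix.mul_apply, Fintype.sum_prod_type, Fin.sum_univ_two]
  ring

theorem act_one (x : H4) : act 1 x = x := by
  apply toMat_inj
  rw [L_act]
  simp

theorem act_mul (g h : G4) (x : H4) : act (g * h) x = act g (act h x) := by
  apply toMat_inj
  rw [L_act, L_act, L_act]
  show ((g.1 * h.1 : SL2) : M2) ⊗ₖ ((g.2.1 * h.2.1 : SL2) : M2) * _ *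
      (((g.2.2.1 * h.2.2.1 : SL2) : M2) ⊗ₖ ((g.2.2.2 * h.2.2.2 : SL2) : M2))ᵀ = _
  simp only [Matrix.SpecialLinearGroup.coe_mul, Matrix.mul_kronecker_mul,
    Matrix.transpose_mul, mul_assoc]

/-- The stabiliser as a subgroup. -/
noncomputable def stabG (s : H4) : Subgroup G4 where
  carrier := {g | act g s = s}
  one_mem' := act_one s
  mul_mem' := by
    intro a b ha hb
    show act (a * b) s = s
    rw [act_mul, hb, ha]
  inv_mem' := by
    intro a ha
    show act a⁻¹ s = s
    calc act a⁻¹ s = act a⁻¹ (act a s) := by rw [ha]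
      _ = act (a⁻¹ * a) s := (act_mul _ _ _).symm
      _ = act 1 s := by rw [inv_mul_cancel]
      _ = s := act_one s

theorem sl2_ext (U V : SL2) (h : (U:M2) = (V:M2)) : U = V := Subtype.ext h

theorem sl2_det (U : SL2) : (U : M2) 0 0 * (U : M2) 1 1 - (U : M2) 0 1 * (U : M2) 1 0 = 1 := by
  have := U.2; rwa [Matrix.det_fin_two] at this

theorem symp (U : SL2) : (U : M2)ᵀ * !![0,1;-1,0] * (U : M2) = !![0,1;-1,0] := by
  have hdet := sl2_det U
  ext i j
  fin_cases i <;> fin_cases j <;>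
    simp [Matrix.mul_apply, Fin.sum_univ_two] <;>
    first
      | linear_combination -hdet
      | linear_combination (-2 : ℂ) * hdet
      | linear_combination hdet
      | ring

noncomputable def Jmat : M2 := !![0,1;-1,0]
noncomputable def Gm : M4 := Jmat ⊗ₖ Jmat

theorem horth (U V : SL2) :
    ((U : M2) ⊗ₖ (V : M2))ᵀ * Gm * ((U : M2) ⊗ₖ (V : M2)) = Gm := by
  rw [Gm, ← Matrix.kroneckerMap_transpose, ← Matrix.mul_kronecker_mul,
    ← Matrix.mul_kronecker_mul]
  rw [show (U : M2)ᵀ * Jmat * (U : M2) = Jmat from symp U,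
      show (V : M2)ᵀ * Jmat * (V : M2) = Jmat from symp V]

/-- The tensor `s` as an explicit 4×4 matrix. -/
noncomputable def Sexp (l1 l2 l3 l4 : ℂ) : M4 := Matrix.of fun i j =>
  if i.1 = i.2 then (if j.1 = j.2 then (if i.1 = j.1 then l1 else l4) else 0)
  else (if j.1 = j.2 then 0 else (if i.1 = j.1 then l3 else l2))

theorem toMat_s (l1 l2 l3 l4 : ℂ) :
    toMat (l1 • u1 + l2 • u2 + l3 • u3 + l4 • u4) = Sexp l1 l2 l3 l4 := by
  ext ⟨i1,i2⟩ ⟨i3,i4⟩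
  fin_cases i1 <;> fin_cases i2 <;> fin_cases i3 <;> fin_cases i4 <;>
    simp [Sexp, toMat, u1, u2, u3, u4, e]

theorem hSsym (l1 l2 l3 l4 : ℂ) : (Sexp l1 l2 l3 l4)ᵀ = Sexp l1 l2 l3 l4 := by
  ext ⟨i1,i2⟩ ⟨i3,i4⟩
  fin_cases i1 <;> fin_cases i2 <;> fin_cases i3 <;> fin_cases i4 <;> simp [Sexp]

noncomputable def Nexp (l1 l2 l3 l4 : ℂ) : M4 := Matrix.of fun i j =>
  if i.1 = i.2 then
    (if j.1 = j.2 then (if i = j then l1^2 + l4^2 else 2*l1*l4) else 0)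
  else
    (if j.1 = j.2 then 0 else (if i = j then l2^2 + l3^2 else 2*l2*l3))

theorem hNval (l1 l2 l3 l4 : ℂ) :
    (Sexp l1 l2 l3 l4 * Gm) * (Sexp l1 l2 l3 l4 * Gm) = Nexp l1 l2 l3 l4 := by
  ext ⟨i1,i2⟩ ⟨i3,i4⟩
  fin_cases i1 <;> fin_cases i2 <;> fin_cases i3 <;> fin_cases i4 <;>
    · simp [Sexp, Gm, Jmat, Nexp, Matrix.mul_apply, Fintype.sum_prod_type,
        Fin.sum_univ_two]
      try ring

theorem keyCommute (S G E F : M4) (hSym : Sᵀ = S)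
    (hEo : Eᵀ * G * E = G) (hFo : Fᵀ * G * F = G)
    (hS : E * S * Fᵀ = S) :
    E * ((S*G)*(S*G)) = ((S*G)*(S*G)) * E ∧ F * ((S*G)*(S*G)) = ((S*G)*(S*G)) * F := by
  have hS' : F * S * Eᵀ = S := by
    have h := congrArg Matrix.transpose hS
    rw [Matrix.transpose_mul, Matrix.transpose_mul, Matrix.transpose_transpose, hSym] at h
    rw [← mul_assoc] at h
    exact h
  have k1 : E * (S * G) = (S * G) * F := by
    calc E * (S * G) = E * S * G := by rw [mul_assoc]
      _ = E * S * (Fᵀ * G * F) := by rw [hFo]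
      _ = (E * S * Fᵀ) * (G * F) := by simp only [mul_assoc]
      _ = S * (G * F) := by rw [hS]
      _ = (S * G) * F := by rw [mul_assoc]
  have k2 : F * (S * G) = (S * G) * E := by
    calc F * (S * G) = F * S * G := by rw [mul_assoc]
      _ = F * S * (Eᵀ * G * E) := by rw [hEo]
      _ = (F * S * Eᵀ) * (G * E) := by simp only [mul_assoc]
      _ = S * (G * E) := by rw [hS']
      _ = (S * G) * E := by rw [mul_assoc]
  constructor
  · calc E * ((S*G)*(S*G)) = (E * (S*G)) * (S*G) := by rw [← mul_assoc]
      _ = ((S*G) * F) * (S*G) := by rw [k1]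
      _ = (S*G) * (F * (S*G)) := by rw [mul_assoc]
      _ = (S*G) * ((S*G) * E) := by rw [k2]
      _ = ((S*G)*(S*G)) * E := by rw [← mul_assoc]
  · calc F * ((S*G)*(S*G)) = (F * (S*G)) * (S*G) := by rw [← mul_assoc]
      _ = ((S*G) * E) * (S*G) := by rw [k2]
      _ = (S*G) * (E * (S*G)) := by rw [mul_assoc]
      _ = (S*G) * ((S*G) * F) := by rw [k1]
      _ = ((S*G)*(S*G)) * F := by rw [← mul_assoc]

theorem extract12 (l1 l2 l3 l4 : ℂ) (A B : M2)
    (hb : l1*l4 ≠ 0) (hd : l2*l3 ≠ 0)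
    (hq1 : (l1+l4)^2 - (l2+l3)^2 ≠ 0) (hq2 : (l1+l4)^2 - (l2-l3)^2 ≠ 0)
    (hq3 : (l1-l4)^2 - (l2+l3)^2 ≠ 0) (hq4 : (l1-l4)^2 - (l2-l3)^2 ≠ 0)
    (hc : (A ⊗ₖ B) * Nexp l1 l2 l3 l4 = Nexp l1 l2 l3 l4 * (A ⊗ₖ B)) :
    A 0 0 * B 1 0 = 0 ∧ A 0 1 * B 1 1 = 0 ∧ A 1 0 * B 0 0 = 0 ∧ A 1 1 * B 0 1 = 0 ∧
    A 0 0 * B 0 1 = 0 ∧ A 0 1 * B 0 0 = 0 ∧ A 1 0 * B 1 1 = 0 ∧ A 1 1 * B 1 0 = 0 ∧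
    A 0 0 * B 0 0 = A 1 1 * B 1 1 ∧ A 0 1 * B 0 1 = A 1 0 * B 1 0 ∧
    A 0 0 * B 1 1 = A 1 1 * B 0 0 ∧ A 0 1 * B 1 0 = A 1 0 * B 0 1 := by
  have hQ12 := mul_ne_zero hq1 hq2
  have hQ34 := mul_ne_zero hq3 hq4
  have hQ13 := mul_ne_zero hq1 hq3
  have hQ24 := mul_ne_zero hq2 hq4
  have h1 := congrFun (congrFun hc ((0:Fin 2),(0:Fin 2))) ((0:Fin 2),(1:Fin 2))
  have h2 := congrFun (congrFun hc ((0:Fin 2),(0:Fin 2))) ((1:Fin 2),(0:Fin 2))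
  have h3 := congrFun (congrFun hc ((1:Fin 2),(1:Fin 2))) ((0:Fin 2),(1:Fin 2))
  have h4 := congrFun (congrFun hc ((1:Fin 2),(1:Fin 2))) ((1:Fin 2),(0:Fin 2))
  have f1 := congrFun (congrFun hc ((0:Fin 2),(1:Fin 2))) ((0:Fin 2),(0:Fin 2))
  have f2 := congrFun (congrFun hc ((1:Fin 2),(0:Fin 2))) ((0:Fin 2),(0:Fin 2))
  have f3 := congrFun (congrFun hc ((0:Fin 2),(1:Fin 2))) ((1:Fin 2),(1:Fin 2))
  have f4 := congrFun (congrFun hc ((1:Fin 2),(0:Fin 2))) ((1:Fin 2),(1:Fin 2))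
  have k1 := congrFun (congrFun hc ((0:Fin 2),(0:Fin 2))) ((0:Fin 2),(0:Fin 2))
  have k2 := congrFun (congrFun hc ((0:Fin 2),(0:Fin 2))) ((1:Fin 2),(1:Fin 2))
  have k3 := congrFun (congrFun hc ((0:Fin 2),(1:Fin 2))) ((0:Fin 2),(1:Fin 2))
  have k4 := congrFun (congrFun hc ((0:Fin 2),(1:Fin 2))) ((1:Fin 2),(0:Fin 2))
  simp only [Matrix.mul_apply, Fintype.sum_prod_type, Fin.sum_univ_two, Nexp,
    Matrix.kroneckerMap_apply, Matrix.of_apply] at h1 h2 h3 h4 f1 f2 f3 f4 k1 k2 k3 k4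
  norm_num at h1 h2 h3 h4 f1 f2 f3 f4 k1 k2 k3 k4
  set a := A 0 0; set b := A 0 1; set c := A 1 0; set d := A 1 1
  set p := B 0 0; set q := B 0 1; set r := B 1 0; set s := B 1 1
  have hb2 : (2:ℂ)*l1*l4 ≠ 0 := by
    have := mul_ne_zero two_ne_zero hb; rwa [← mul_assoc] at this
  have hd2 : (2:ℂ)*l2*l3 ≠ 0 := by
    have := mul_ne_zero two_ne_zero hd; rwa [← mul_assoc] at this
  -- group 1 : variables aq bp cs dr
  have gupw : ((l1+l4)^2 - (l2+l3)^2) * ((l1+l4)^2 - (l2-l3)^2) * (a*q + c*s) = 0 := by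
    linear_combination ((l2^2+l3^2) - (l1^2+l4^2) - 2*l1*l4) * h1
      + ((l2^2+l3^2) - (l1^2+l4^2) - 2*l1*l4) * h3 - (2*l2*l3) * h2 - (2*l2*l3) * h4
  have gumw : ((l1-l4)^2 - (l2+l3)^2) * ((l1-l4)^2 - (l2-l3)^2) * (a*q - c*s) = 0 := by
    linear_combination ((l2^2+l3^2) - (l1^2+l4^2) + 2*l1*l4) * h1
      - ((l2^2+l3^2) - (l1^2+l4^2) + 2*l1*l4) * h3 - (2*l2*l3) * h2 + (2*l2*l3) * h4
  have gvpz : ((l1+l4)^2 - (l2+l3)^2) * ((l1+l4)^2 - (l2-l3)^2) * (b*p + d*r) = 0 := by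
    linear_combination ((l2^2+l3^2) - (l1^2+l4^2) - 2*l1*l4) * h2
      + ((l2^2+l3^2) - (l1^2+l4^2) - 2*l1*l4) * h4 - (2*l2*l3) * h1 - (2*l2*l3) * h3
  have gvmz : ((l1-l4)^2 - (l2+l3)^2) * ((l1-l4)^2 - (l2-l3)^2) * (b*p - d*r) = 0 := by
    linear_combination ((l2^2+l3^2) - (l1^2+l4^2) + 2*l1*l4) * h2
      - ((l2^2+l3^2) - (l1^2+l4^2) + 2*l1*l4) * h4 - (2*l2*l3) * h1 + (2*l2*l3) * h3
  have e1 : a*q + c*s = 0 := by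
    rcases mul_eq_zero.mp gupw with h | h; · exact absurd h hQ12
    exact h
  have e2 : a*q - c*s = 0 := by
    rcases mul_eq_zero.mp gumw with h | h; · exact absurd h hQ34
    exact h
  have e3 : b*p + d*r = 0 := by
    rcases mul_eq_zero.mp gvpz with h | h; · exact absurd h hQ12
    exact h
  have e4 : b*p - d*r = 0 := by
    rcases mul_eq_zero.mp gvmz with h | h; · exact absurd h hQ34
    exact h
  -- group 2 : variables ar bs cp dq
  have fupw : ((l1+l4)^2 - (l2+l3)^2) * ((l1-l4)^2 - (l2+l3)^2) * (a*r + c*p) = 0 := by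
    linear_combination ((l1^2+l4^2) - (l2^2+l3^2) - 2*l2*l3) * f1
      + ((l1^2+l4^2) - (l2^2+l3^2) - 2*l2*l3) * f2 - (2*l1*l4) * f3 - (2*l1*l4) * f4
  have fumw : ((l1+l4)^2 - (l2-l3)^2) * ((l1-l4)^2 - (l2-l3)^2) * (a*r - c*p) = 0 := by
    linear_combination ((l1^2+l4^2) - (l2^2+l3^2) + 2*l2*l3) * f1
      - ((l1^2+l4^2) - (l2^2+l3^2) + 2*l2*l3) * f2 - (2*l1*l4) * f3 + (2*l1*l4) * f4
  have fvpz : ((l1+l4)^2 - (l2+l3)^2) * ((l1-l4)^2 - (l2+l3)^2) * (b*s + d*q) = 0 := by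
    linear_combination ((l1^2+l4^2) - (l2^2+l3^2) - 2*l2*l3) * f3
      + ((l1^2+l4^2) - (l2^2+l3^2) - 2*l2*l3) * f4 - (2*l1*l4) * f1 - (2*l1*l4) * f2
  have fvmz : ((l1+l4)^2 - (l2-l3)^2) * ((l1-l4)^2 - (l2-l3)^2) * (b*s - d*q) = 0 := by
    linear_combination ((l1^2+l4^2) - (l2^2+l3^2) + 2*l2*l3) * f3
      - ((l1^2+l4^2) - (l2^2+l3^2) + 2*l2*l3) * f4 - (2*l1*l4) * f1 + (2*l1*l4) * f2
  have e5 : a*r + c*p = 0 := by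
    rcases mul_eq_zero.mp fupw with h | h; · exact absurd h hQ13
    exact h
  have e6 : a*r - c*p = 0 := by
    rcases mul_eq_zero.mp fumw with h | h; · exact absurd h hQ24
    exact h
  have e7 : b*s + d*q = 0 := by
    rcases mul_eq_zero.mp fvpz with h | h; · exact absurd h hQ13
    exact h
  have e8 : b*s - d*q = 0 := by
    rcases mul_eq_zero.mp fvmz with h | h; · exact absurd h hQ24
    exact h
  -- diagonal blocks
  have e9 : b*q = c*r := by
    have h : (2*l1*l4) * (b*q - c*r) = 0 := by linear_combination k1
    rcases mul_eq_zero.mp h with h' | h'; · exact absurd h' hb2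
    exact sub_eq_zero.mp h'
  have e10 : a*p = d*s := by
    have h : (2*l1*l4) * (a*p - d*s) = 0 := by linear_combination k2
    rcases mul_eq_zero.mp h with h' | h'; · exact absurd h' hb2
    exact sub_eq_zero.mp h'
  have e11 : b*r = c*q := by
    have h : (2*l2*l3) * (b*r - c*q) = 0 := by linear_combination k3
    rcases mul_eq_zero.mp h with h' | h'; · exact absurd h' hd2
    exact sub_eq_zero.mp h'
  have e12 : a*s = d*p := by
    have h : (2*l2*l3) * (a*s - d*p) = 0 := by linear_combination k4
    rcases mul_eq_zero.mp h with h' | h'; · exact absurd h' hd2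
    exact sub_eq_zero.mp h'
  refine ⟨?_, ?_, ?_, ?_, ?_, ?_, ?_, ?_, e10, e9, e12, e11⟩ <;>
    [ linear_combination (e5+e6)/2; linear_combination (e7+e8)/2;
      linear_combination (e5-e6)/2; linear_combination (e7-e8)/2;
      linear_combination (e1+e2)/2; linear_combination (e3+e4)/2;
      linear_combination (e1-e2)/2; linear_combination (e3-e4)/2 ]

noncomputable def mmat : Fin 4 → M2 :=
  ![1, !![0,1;-1,0], !![0,I;I,0], !![I,0;0,-I]]

theorem classify (A B : M2)
    (hA : A 0 0 * A 1 1 - A 0 1 * A 1 0 = 1)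
    (hB : B 0 0 * B 1 1 - B 0 1 * B 1 0 = 1)
    (e1 : A 0 0 * B 1 0 = 0) (e2 : A 0 1 * B 1 1 = 0) (e3 : A 1 0 * B 0 0 = 0)
    (e4 : A 1 1 * B 0 1 = 0) (e5 : A 0 0 * B 0 1 = 0) (e6 : A 0 1 * B 0 0 = 0)
    (e7 : A 1 0 * B 1 1 = 0) (e8 : A 1 1 * B 1 0 = 0)
    (e9 : A 0 0 * B 0 0 = A 1 1 * B 1 1) (e10 : A 0 1 * B 0 1 = A 1 0 * B 1 0)
    (e11 : A 0 0 * B 1 1 = A 1 1 * B 0 0) (e12 : A 0 1 * B 1 0 = A 1 0 * B 0 1) :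
    ∃ (m : Fin 4) (x y : ℂ), x^2 = 1 ∧ y^2 = 1 ∧ A = x • mmat m ∧ B = y • mmat m := by
  set a := A 0 0 with ha'; set b := A 0 1 with hb'
  set c := A 1 0 with hc'; set d := A 1 1 with hd'
  set p := B 0 0 with hp'; set q := B 0 1 with hq'
  set r := B 1 0 with hr'; set s := B 1 1 with hs'
  by_cases ha : a = 0
  · -- antidiagonal case
    have hbc : b * c = -1 := by rw [ha] at hA; linear_combination -hA
    have hb0 : b ≠ 0 := fun h => by rw [h] at hbc; simp at hbc
    have hc0 : c ≠ 0 := fun h => by rw [h] at hbc; simp at hbc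
    have hp0 : p = 0 := by
      rcases mul_eq_zero.mp e6 with h | h; · exact absurd h hb0
      exact h
    have hs0 : s = 0 := by
      rcases mul_eq_zero.mp e2 with h | h; · exact absurd h hb0
      exact h
    have hqr : q * r = -1 := by rw [hp0, hs0] at hB; linear_combination -hB
    have hq0 : q ≠ 0 := fun h => by rw [h] at hqr; simp at hqr
    have hr0 : r ≠ 0 := fun h => by rw [h] at hqr; simp at hqr
    have hd0 : d = 0 := by
      rcases mul_eq_zero.mp e4 with h | h; · exact h
      exact absurd h hq0
    have hb2c2 : (b - c) * (b + c) = 0 := by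
      have h : ((b - c) * (b + c)) * (q * r) = 0 := by
        linear_combination (b*r)*e10 + (c*r)*e12
      rcases mul_eq_zero.mp h with h | h; · exact h
      rw [h] at hqr; simp at hqr
    rcases mul_eq_zero.mp hb2c2 with hbc' | hbc'
    · -- b = c : K case
      have hcb : c = b := by linear_combination -hbc'
      have hrq : r = q := by
        apply mul_left_cancel₀ hb0
        rw [hcb] at e12; linear_combination e12
      have hbb : b^2 = -1 := by rw [hcb] at hbc; linear_combination hbc
      have hqq : q^2 = -1 := by rw [hrq] at hqr; linear_combination hqr
      refine ⟨2, -b*I, -q*I, by linear_combination I^2*hbb - Complex.I_sq,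
        by linear_combination I^2*hqq - Complex.I_sq, ?_, ?_⟩ <;>
        · ext i j
          fin_cases i <;> fin_cases j <;>
            simp [mmat, mul_assoc, Complex.I_mul_I,
              ← ha', ← hb', ← hc', ← hd', ← hp', ← hq', ← hr', ← hs'] <;>
            first
              | rfl
              | assumption
              | (linear_combination (A 1 0)*Complex.I_mul_I - hcb)
              | (linear_combination (B 1 0)*Complex.I_mul_I - hrq)
              | linear_combination
              | linear_combination hcb
              | linear_combination hrq
    · -- b = -c : J case
      have hcb : c = -b := by linear_combination hbc'
      have hrq : r = -q := by
        apply mul_left_cancel₀ hb0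
        rw [hcb] at e12; linear_combination e12
      have hbb : b^2 = 1 := by rw [hcb] at hbc; linear_combination -hbc
      have hqq : q^2 = 1 := by rw [hrq] at hqr; linear_combination -hqr
      refine ⟨1, b, q, hbb, hqq, ?_, ?_⟩ <;>
        · ext i j
          fin_cases i <;> fin_cases j <;>
            simp [mmat, ← ha', ← hb', ← hc', ← hd', ← hp', ← hq', ← hr', ← hs'] <;>
            first | rfl | assumption | linear_combination hcb | linear_combination hrq
  · -- diagonal case
    have hq0 : q = 0 := by
      rcases mul_eq_zero.mp e5 with h | h; · exact absurd h ha
      exact h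
    have hr0 : r = 0 := by
      rcases mul_eq_zero.mp e1 with h | h; · exact absurd h ha
      exact h
    have hps : p * s = 1 := by rw [hq0, hr0] at hB; linear_combination hB
    have hp0 : p ≠ 0 := fun h => by rw [h] at hps; simp at hps
    have hs0 : s ≠ 0 := fun h => by rw [h] at hps; simp at hps
    have hc0 : c = 0 := by
      rcases mul_eq_zero.mp e3 with h | h; · exact h
      exact absurd h hp0
    have hb0 : b = 0 := by
      rcases mul_eq_zero.mp e2 with h | h; · exact h
      exact absurd h hs0
    have had : a * d = 1 := by rw [hb0, hc0] at hA; linear_combination hA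
    have hd0 : d ≠ 0 := fun h => by rw [h] at had; simp at had
    have ha2d2 : (a - d) * (a + d) = 0 := by
      have h : ((a - d) * (a + d)) * (p * s) = 0 := by
        linear_combination (a*s)*e9 + (d*s)*e11
      rcases mul_eq_zero.mp h with h | h; · exact h
      rw [h] at hps; simp at hps
    rcases mul_eq_zero.mp ha2d2 with had' | had'
    · -- d = a : identity case
      have hda : d = a := by linear_combination -had'
      have hsp : p = s := by
        apply mul_left_cancel₀ ha
        rw [hda] at e9; linear_combination e9
      have haa : a^2 = 1 := by rw [hda] at had; linear_combination had
      have hss : s^2 = 1 := by rw [hsp] at hps; linear_combination hps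
      refine ⟨0, a, s, haa, hss, ?_, ?_⟩ <;>
        · ext i j
          fin_cases i <;> fin_cases j <;>
            simp [mmat, ← ha', ← hb', ← hc', ← hd', ← hp', ← hq', ← hr', ← hs'] <;>
            first | rfl | assumption | linear_combination hda | linear_combination hsp
    · -- d = -a : L case
      have hda : d = -a := by linear_combination had'
      have hsp : p = -s := by
        apply mul_left_cancel₀ ha
        rw [hda] at e9; linear_combination e9
      have haa : a^2 = -1 := by rw [hda] at had; linear_combination -had
      have hss : s^2 = -1 := by rw [hsp] at hps; linear_combination -hps
      refine ⟨3, -a*I, s*I, by linear_combination I^2*haa - Complex.I_sq,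
        by linear_combination I^2*hss - Complex.I_sq, ?_, ?_⟩ <;>
        · ext i j
          fin_cases i <;> fin_cases j <;>
            simp [mmat, mul_assoc, Complex.I_mul_I,
              ← ha', ← hb', ← hc', ← hd', ← hp', ← hq', ← hr', ← hs'] <;>
            first
              | rfl
              | assumption
              | linear_combination
              | linear_combination hda
              | linear_combination hsp
              | linear_combination -hsp

theorem final_link (l1 l2 l3 l4 : ℂ)
    (h1 : l1 ≠ 0) (h3 : l3 ≠ 0)
    (hgen : ∀ e2 e3 e4 : ℂ, (e2 = 1 ∨ e2 = -1) → (e3 = 1 ∨ e3 = -1) →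
      (e4 = 1 ∨ e4 = -1) → l1 ≠ e2 * l2 + e3 * l3 + e4 * l4)
    (m : Fin 4) (x1 x2 x3 x4 : ℂ)
    (hx1 : x1^2 = 1) (hx2 : x2^2 = 1) (hx3 : x3^2 = 1) (hx4 : x4^2 = 1)
    (hS : ((x1 • (1:M2)) ⊗ₖ (x2 • (1:M2))) * Sexp l1 l2 l3 l4 *
        ((x3 • mmat m) ⊗ₖ (x4 • mmat m))ᵀ = Sexp l1 l2 l3 l4) :
    m = 0 ∧ x1*x2*x3*x4 = 1 := by
  have hv : (x1*x2*x3*x4 - 1) * (x1*x2*x3*x4 + 1) = 0 := by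
    linear_combination (x2^2*x3^2*x4^2)*hx1 + (x3^2*x4^2)*hx2 + (x4^2)*hx3 + hx4
  have hA := congrFun (congrFun hS ((0:Fin 2),(0:Fin 2))) ((0:Fin 2),(0:Fin 2))
  have hB := congrFun (congrFun hS ((0:Fin 2),(1:Fin 2))) ((0:Fin 2),(1:Fin 2))
  fin_cases m <;>
    simp only [mmat, Matrix.mul_apply, Fintype.sum_prod_type, Fin.sum_univ_two,
      Matrix.kroneckerMap_apply, Matrix.transpose_apply, Matrix.smul_apply,
      Matrix.one_apply, Matrix.cons_val', Matrix.cons_val_zero, Matrix.cons_val_one,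
      Matrix.head_cons, Matrix.head_fin_const, Matrix.empty_val', Matrix.cons_val_fin_one,
      Sexp, Matrix.of_apply, smul_eq_mul] at hA hB
  · -- m = 0
    norm_num at hA hB
    refine ⟨rfl, ?_⟩
    have hv0 : (x1*x2*x3*x4 - 1) * l1 = 0 := by linear_combination hA
    rcases mul_eq_zero.mp hv0 with h | h
    · linear_combination h
    · exact absurd h h1
  · -- m = 1 : J
    exfalso
    norm_num at hA hB
    rcases mul_eq_zero.mp hv with h | h
    · have hA' : l4 = l1 := by linear_combination hA - l4*h
      have hB' : l3 = -l2 := by linear_combination -hB - l2*h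
      exact hgen 1 1 1 (Or.inl rfl) (Or.inl rfl) (Or.inl rfl)
        (by linear_combination -hA' - hB')
    · have hA' : l4 = -l1 := by linear_combination -hA + l4*h
      have hB' : l3 = l2 := by linear_combination -hB - l2*h
      exact hgen 1 (-1) (-1) (Or.inl rfl) (Or.inr rfl) (Or.inr rfl)
        (by linear_combination hA' + hB')
  · -- m = 2 : K
    exfalso
    norm_num at hA hB
    have hA2 : x1*x2*l4*(x3*x4) = -l1 := by
      linear_combination -hA + (x1*x2*l4*x3*x4)*Complex.I_sq
    have hB2 : x1*x2*l2*(x3*x4) = -l3 := by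
      linear_combination -hB + (x1*x2*l2*x3*x4)*Complex.I_sq
    rcases mul_eq_zero.mp hv with h | h
    · have hA' : l4 = -l1 := by linear_combination hA2 - l4*h
      have hB' : l2 = -l3 := by linear_combination hB2 - l2*h
      exact hgen 1 1 (-1) (Or.inl rfl) (Or.inl rfl) (Or.inr rfl)
        (by linear_combination hA' - hB')
    · have hA' : l4 = l1 := by linear_combination -hA2 + l4*h
      have hB' : l2 = l3 := by linear_combination -hB2 + l2*h
      exact hgen 1 (-1) 1 (Or.inl rfl) (Or.inr rfl) (Or.inl rfl)
        (by linear_combination -hA' - hB')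
  · -- m = 3 : L
    exfalso
    norm_num at hA hB
    have hA2 : (x1*x2*x3*x4 + 1) * l1 = 0 := by
      linear_combination -hA + (x1*x2*l1*x3*x4)*Complex.I_sq
    have hB2 : (x1*x2*x3*x4 - 1) * l3 = 0 := by
      linear_combination hB + (x1*x2*l3*x3*x4)*Complex.I_sq
    have hA3 : x1*x2*x3*x4 + 1 = 0 := by
      rcases mul_eq_zero.mp hA2 with h | h; · exact h
      exact absurd h h1
    have hB3 : x1*x2*x3*x4 - 1 = 0 := by
      rcases mul_eq_zero.mp hB2 with h | h; · exact h
      exact absurd h h3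
    have : (2:ℂ) = 0 := by linear_combination hA3 - hB3
    norm_num at this

theorem gfix1 (l1 l2 l3 l4 : ℂ) :
    ((Jm:M2) ⊗ₖ (Jm:M2)) * Sexp l1 l2 l3 l4 * ((Jm:M2) ⊗ₖ (Jm:M2))ᵀ = Sexp l1 l2 l3 l4 := by
  ext ⟨i1,i2⟩ ⟨i3,i4⟩
  fin_cases i1 <;> fin_cases i2 <;> fin_cases i3 <;> fin_cases i4 <;>
    · simp [Sexp, Jm, Matrix.mul_apply, Fintype.sum_prod_type, Fin.sum_univ_two]
      try ring

theorem gfix4 (l1 l2 l3 l4 : ℂ) :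
    ((Km:M2) ⊗ₖ (Km:M2)) * Sexp l1 l2 l3 l4 * ((Km:M2) ⊗ₖ (Km:M2))ᵀ = Sexp l1 l2 l3 l4 := by
  ext ⟨i1,i2⟩ ⟨i3,i4⟩
  fin_cases i1 <;> fin_cases i2 <;> fin_cases i3 <;> fin_cases i4 <;>
    · simp [Sexp, Km, Matrix.mul_apply, Fintype.sum_prod_type, Fin.sum_univ_two]
      try (ring_nf; simp [Complex.I_sq])
      try ring

theorem gfix2 (l1 l2 l3 l4 : ℂ) :
    ((negI:M2) ⊗ₖ (negI:M2)) * Sexp l1 l2 l3 l4 *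
      (((1:SL2):M2) ⊗ₖ ((1:SL2):M2))ᵀ = Sexp l1 l2 l3 l4 := by
  ext ⟨i1,i2⟩ ⟨i3,i4⟩
  fin_cases i1 <;> fin_cases i2 <;> fin_cases i3 <;> fin_cases i4 <;>
    · simp [Sexp, negI, Matrix.mul_apply, Fintype.sum_prod_type, Fin.sum_univ_two,
        Matrix.one_apply]
      try ring

theorem gfix3 (l1 l2 l3 l4 : ℂ) :
    ((negI:M2) ⊗ₖ ((1:SL2):M2)) * Sexp l1 l2 l3 l4 *
      (((negI:SL2):M2) ⊗ₖ ((1:SL2):M2))ᵀ = Sexp l1 l2 l3 l4 := by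
  ext ⟨i1,i2⟩ ⟨i3,i4⟩
  fin_cases i1 <;> fin_cases i2 <;> fin_cases i3 <;> fin_cases i4 <;>
    · simp [Sexp, negI, Matrix.mul_apply, Fintype.sum_prod_type, Fin.sum_univ_two,
        Matrix.one_apply]
      try ring

theorem JJ : Jm * Jm = negI := by
  apply sl2_ext
  rw [Matrix.SpecialLinearGroup.coe_mul]; simp only [Jm, negI]
  ext i j; fin_cases i <;> fin_cases j <;>
    simp [Matrix.mul_apply, Fin.sum_univ_two]

theorem KK : Km * Km = negI := by
  apply sl2_ext
  rw [Matrix.SpecialLinearGroup.coe_mul]; simp only [Km, negI]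
  ext i j; fin_cases i <;> fin_cases j <;>
    simp [Matrix.mul_apply, Fin.sum_univ_two, Complex.I_mul_I]

theorem nn : negI * negI = 1 := by
  apply sl2_ext
  rw [Matrix.SpecialLinearGroup.coe_mul]
  simp only [Matrix.SpecialLinearGroup.coe_one, negI]
  ext i j; fin_cases i <;> fin_cases j <;>
    simp [Matrix.mul_apply, Fin.sum_univ_two, Matrix.one_apply]

noncomputable def Lm : SL2 := Jm * Km

noncomputable def mat4 : Fin 4 → SL2 := ![1, Jm, Km, Lm]

theorem coe_mat4 (m : Fin 4) : ((mat4 m : SL2) : M2) = mmat m := by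
  fin_cases m
  · simp [mat4, mmat]
  · simp only [mat4, mmat]
    simp [Jm]
  · simp only [mat4, mmat]
    simp [Km]
  · simp only [mat4, mmat, Lm, Matrix.SpecialLinearGroup.coe_mul]
    norm_num
    ext i j; fin_cases i <;> fin_cases j <;>
      simp [Jm, Km, Matrix.mul_apply, Fin.sum_univ_two]

noncomputable def sg : Bool → SL2 := fun b => bif b then negI else 1

noncomputable def tau (m : Fin 4) : G4 := (mat4 m, mat4 m, mat4 m, mat4 m)

noncomputable def f32 (p : Fin 4 × Bool × Bool × Bool) : G4 :=
  (sg p.2.1 * mat4 p.1, sg p.2.2.1 * mat4 p.1, sg p.2.2.2 * mat4 p.1,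
    sg (xor p.2.1 (xor p.2.2.1 p.2.2.2)) * mat4 p.1)

def gens : Set G4 := {(Jm, Jm, Jm, Jm), (negI, negI, 1, 1), (negI, 1, negI, 1),
  (Km, Km, Km, Km)}

theorem tau_mem (m : Fin 4) : tau m ∈ Subgroup.closure gens := by
  have hg1 : (Jm,Jm,Jm,Jm) ∈ Subgroup.closure gens :=
    Subgroup.subset_closure (by simp [gens])
  have hg4 : (Km,Km,Km,Km) ∈ Subgroup.closure gens :=
    Subgroup.subset_closure (by simp [gens])
  fin_cases m <;> simp only [tau, mat4] <;> norm_num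
  · exact one_mem _
  · exact hg1
  · exact hg4
  · rw [show ((Lm,Lm,Lm,Lm) : G4) = (Jm,Jm,Jm,Jm) * (Km,Km,Km,Km) from rfl]
    exact mul_mem hg1 hg4

theorem sgn_mem (b1 b2 b3 : Bool) :
    ((sg b1, sg b2, sg b3, sg (xor b1 (xor b2 b3))) : G4) ∈ Subgroup.closure gens := by
  have hg1 : (Jm,Jm,Jm,Jm) ∈ Subgroup.closure gens :=
    Subgroup.subset_closure (by simp [gens])
  have hg2 : ((negI,negI,1,1) : G4) ∈ Subgroup.closure gens :=
    Subgroup.subset_closure (by simp [gens])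
  have hg3 : ((negI,1,negI,1) : G4) ∈ Subgroup.closure gens :=
    Subgroup.subset_closure (by simp [gens])
  have hn4 : ((negI,negI,negI,negI) : G4) ∈ Subgroup.closure gens := by
    have h : ((negI,negI,negI,negI) : G4) = (Jm,Jm,Jm,Jm) * (Jm,Jm,Jm,Jm) := by
      simp [Prod.ext_iff, JJ]
    rw [h]; exact mul_mem hg1 hg1
  cases b1 <;> cases b2 <;> cases b3
  · exact one_mem _
  · show ((1:SL2), (1:SL2), negI, negI) ∈ _
    rw [show ((1:SL2), (1:SL2), negI, negI) = ((negI,negI,1,1) : G4) * (negI,negI,negI,negI)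
      from by simp [Prod.ext_iff, nn, one_mul, mul_one]]
    exact mul_mem hg2 hn4
  · show ((1:SL2), negI, (1:SL2), negI) ∈ _
    rw [show ((1:SL2), negI, (1:SL2), negI) = ((negI,1,negI,1) : G4) * (negI,negI,negI,negI)
      from by simp [Prod.ext_iff, nn, one_mul, mul_one]]
    exact mul_mem hg3 hn4
  · show ((1:SL2), negI, negI, (1:SL2)) ∈ _
    rw [show ((1:SL2), negI, negI, (1:SL2)) = ((negI,negI,1,1) : G4) * (negI,1,negI,1)
      from by simp [Prod.ext_iff, nn, one_mul, mul_one]]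
    exact mul_mem hg2 hg3
  · show (negI, (1:SL2), (1:SL2), negI) ∈ _
    rw [show (negI, (1:SL2), (1:SL2), negI) =
        ((negI,negI,1,1) : G4) * (negI,1,negI,1) * (negI,negI,negI,negI)
      from by simp [Prod.ext_iff, nn, one_mul, mul_one]]
    exact mul_mem (mul_mem hg2 hg3) hn4
  · exact hg3
  · exact hg2
  · exact hn4

set_option maxHeartbeats 1000000 in
theorem sgmat_inj (b b' : Bool) (m m' : Fin 4) (h : sg b * mat4 m = sg b' * mat4 m') :
    b = b' ∧ m = m' := by
  have h2 := congrArg (fun u : SL2 => (u : M2)) h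
  simp only [Matrix.SpecialLinearGroup.coe_mul, coe_mat4] at h2
  clear h
  cases b <;> cases b' <;> fin_cases m <;> fin_cases m' <;>
    first
    | exact ⟨rfl, rfl⟩
    | (exfalso
       have e1 := congrFun (congrFun h2 0) 0
       have e2 := congrFun (congrFun h2 0) 1
       norm_num [sg, negI, mmat, Matrix.mul_apply, Fin.sum_univ_two, Matrix.one_apply,
         Complex.ext_iff, cond] at e1 <;>
       norm_num [sg, negI, mmat, Matrix.mul_apply, Fin.sum_univ_two, Matrix.one_apply,
         Complex.ext_iff, cond] at e2)

theorem qnz (l1 l2 l3 l4 : ℂ)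
    (hgen : ∀ e2 e3 e4 : ℂ, (e2 = 1 ∨ e2 = -1) → (e3 = 1 ∨ e3 = -1) →
      (e4 = 1 ∨ e4 = -1) → l1 ≠ e2 * l2 + e3 * l3 + e4 * l4) :
    ((l1+l4)^2 - (l2+l3)^2 ≠ 0) ∧ ((l1+l4)^2 - (l2-l3)^2 ≠ 0) ∧
    ((l1-l4)^2 - (l2+l3)^2 ≠ 0) ∧ ((l1-l4)^2 - (l2-l3)^2 ≠ 0) := by
  refine ⟨fun h => ?_, fun h => ?_, fun h => ?_, fun h => ?_⟩
  · rcases mul_eq_zero.mp (show (l1+l4-(l2+l3))*(l1+l4+(l2+l3)) = 0 from by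
      linear_combination h) with h2 | h2
    · exact hgen 1 1 (-1) (Or.inl rfl) (Or.inl rfl) (Or.inr rfl) (by linear_combination h2)
    · exact hgen (-1) (-1) (-1) (Or.inr rfl) (Or.inr rfl) (Or.inr rfl) (by linear_combination h2)
  · rcases mul_eq_zero.mp (show (l1+l4-(l2-l3))*(l1+l4+(l2-l3)) = 0 from by
      linear_combination h) with h2 | h2
    · exact hgen 1 (-1) (-1) (Or.inl rfl) (Or.inr rfl) (Or.inr rfl) (by linear_combination h2)
    · exact hgen (-1) 1 (-1) (Or.inr rfl) (Or.inl rfl) (Or.inr rfl) (by linear_combination h2)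
  · rcases mul_eq_zero.mp (show (l1-l4-(l2+l3))*(l1-l4+(l2+l3)) = 0 from by
      linear_combination h) with h2 | h2
    · exact hgen 1 1 1 (Or.inl rfl) (Or.inl rfl) (Or.inl rfl) (by linear_combination h2)
    · exact hgen (-1) (-1) 1 (Or.inr rfl) (Or.inr rfl) (Or.inl rfl) (by linear_combination h2)
  · rcases mul_eq_zero.mp (show (l1-l4-(l2-l3))*(l1-l4+(l2-l3)) = 0 from by
      linear_combination h) with h2 | h2
    · exact hgen 1 (-1) 1 (Or.inl rfl) (Or.inr rfl) (Or.inl rfl) (by linear_combination h2)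
    · exact hgen (-1) 1 1 (Or.inr rfl) (Or.inl rfl) (Or.inl rfl) (by linear_combination h2)

theorem fix_iff (l1 l2 l3 l4 : ℂ) (g : G4) :
    act g (l1 • u1 + l2 • u2 + l3 • u3 + l4 • u4) = l1 • u1 + l2 • u2 + l3 • u3 + l4 • u4 ↔
    ((g.1:M2) ⊗ₖ (g.2.1:M2)) * Sexp l1 l2 l3 l4 * ((g.2.2.1:M2) ⊗ₖ (g.2.2.2:M2))ᵀ =
      Sexp l1 l2 l3 l4 := by
  constructor
  · intro h
    have h2 := congrArg toMat h
    rwa [L_act, toMat_s] at h2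
  · intro h
    apply toMat_inj
    rw [L_act, toMat_s, h]

theorem gens_sub_stab (l1 l2 l3 l4 : ℂ) :
    gens ⊆ (stabG (l1 • u1 + l2 • u2 + l3 • u3 + l4 • u4) : Set G4) := by
  intro g hg
  simp only [gens, Set.mem_insert_iff, Set.mem_singleton_iff] at hg
  rcases hg with rfl | rfl | rfl | rfl
  · exact (fix_iff l1 l2 l3 l4 _).2 (gfix1 l1 l2 l3 l4)
  · exact (fix_iff l1 l2 l3 l4 _).2 (gfix2 l1 l2 l3 l4)
  · exact (fix_iff l1 l2 l3 l4 _).2 (gfix3 l1 l2 l3 l4)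
  · exact (fix_iff l1 l2 l3 l4 _).2 (gfix4 l1 l2 l3 l4)

theorem closure_le_stab (l1 l2 l3 l4 : ℂ) :
    Subgroup.closure gens ≤ stabG (l1 • u1 + l2 • u2 + l3 • u3 + l4 • u4) :=
  (Subgroup.closure_le _).2 (gens_sub_stab l1 l2 l3 l4)

theorem f32_mem (p : Fin 4 × Bool × Bool × Bool) : f32 p ∈ Subgroup.closure gens := by
  obtain ⟨m, b1, b2, b3⟩ := p
  rw [show f32 (m, b1, b2, b3) =
      ((sg b1, sg b2, sg b3, sg (xor b1 (xor b2 b3))) : G4) * tau m from rfl]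
  exact mul_mem (sgn_mem b1 b2 b3) (tau_mem m)

theorem f32_inj : Function.Injective f32 := by
  rintro ⟨m, b1, b2, b3⟩ ⟨m', b1', b2', b3'⟩ h
  have c1 : sg b1 * mat4 m = sg b1' * mat4 m' := congrArg Prod.fst h
  have c2 : sg b2 * mat4 m = sg b2' * mat4 m' := congrArg (fun z => z.2.1) h
  have c3 : sg b3 * mat4 m = sg b3' * mat4 m' := congrArg (fun z => z.2.2.1) h
  obtain ⟨hb1, hm⟩ := sgmat_inj b1 b1' m m' c1
  subst hm; subst hb1
  obtain ⟨hb2, -⟩ := sgmat_inj b2 b2' m m c2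
  obtain ⟨hb3, -⟩ := sgmat_inj b3 b3' m m c3
  subst hb2; subst hb3
  rfl

theorem scalar_to_sg (U : SL2) (x : ℂ) (hx : x^2 = 1) (hU : (U:M2) = x • 1) :
    ∃ b : Bool, U = sg b ∧ x = (bif b then -1 else 1) := by
  have h' : (x-1)*(x+1) = 0 := by linear_combination hx
  rcases mul_eq_zero.mp h' with h | h
  · have hx1 : x = 1 := by linear_combination h
    refine ⟨false, sl2_ext _ _ ?_, by rw [hx1]; rfl⟩
    rw [hU, hx1, one_smul]
    rfl
  · have hx1 : x = -1 := by linear_combination h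
    refine ⟨true, sl2_ext _ _ ?_, by rw [hx1]; rfl⟩
    rw [hU, hx1]
    show _ = (negI : M2)
    ext i j
    fin_cases i <;> fin_cases j <;> simp [negI, Matrix.one_apply]

theorem bool_prod (b1 b2 b3 b4 : Bool)
    (h : (bif b1 then (-1:ℂ) else 1) * (bif b2 then -1 else 1) * (bif b3 then -1 else 1) *
      (bif b4 then -1 else 1) = 1) : b4 = xor b1 (xor b2 b3) := by
  cases b1 <;> cases b2 <;> cases b3 <;> cases b4 <;> first | rfl | (norm_num at h)

theorem stab_sub (l1 l2 l3 l4 : ℂ)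
    (h1 : l1 ≠ 0) (h2 : l2 ≠ 0) (h3 : l3 ≠ 0) (h4 : l4 ≠ 0)
    (hgen : ∀ e2 e3 e4 : ℂ, (e2 = 1 ∨ e2 = -1) → (e3 = 1 ∨ e3 = -1) →
      (e4 = 1 ∨ e4 = -1) → l1 ≠ e2 * l2 + e3 * l3 + e4 * l4)
    (g : G4)
    (hg : act g (l1 • u1 + l2 • u2 + l3 • u3 + l4 • u4) =
      l1 • u1 + l2 • u2 + l3 • u3 + l4 • u4) :
    ∃ p, g = f32 p := by
  obtain ⟨A, B, C, D⟩ := g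
  obtain ⟨hq1, hq2, hq3, hq4⟩ := qnz l1 l2 l3 l4 hgen
  have hb : l1*l4 ≠ 0 := mul_ne_zero h1 h4
  have hd : l2*l3 ≠ 0 := mul_ne_zero h2 h3
  have hmat := (fix_iff l1 l2 l3 l4 (A,B,C,D)).1 hg
  have kc := keyCommute (Sexp l1 l2 l3 l4) Gm _ _ (hSsym l1 l2 l3 l4)
    (horth A B) (horth C D) hmat
  rw [hNval] at kc
  obtain ⟨f1,f2,f3,f4,f5,f6,f7,f8,f9,f10,f11,f12⟩ :=
    extract12 l1 l2 l3 l4 (A:M2) (B:M2) hb hd hq1 hq2 hq3 hq4 kc.1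
  obtain ⟨m, x1, x2, hx1, hx2, hA, hB⟩ :=
    classify (A:M2) (B:M2) (sl2_det A) (sl2_det B) f1 f2 f3 f4 f5 f6 f7 f8 f9 f10 f11 f12
  -- normalise by tau m
  have hg'stab : act ((A,B,C,D) * (tau m)⁻¹) (l1 • u1 + l2 • u2 + l3 • u3 + l4 • u4) =
      l1 • u1 + l2 • u2 + l3 • u3 + l4 • u4 := by
    have htau : tau m ∈ stabG (l1 • u1 + l2 • u2 + l3 • u3 + l4 • u4) :=
      closure_le_stab l1 l2 l3 l4 (tau_mem m)
    exact (stabG _).mul_mem hg ((stabG _).inv_mem htau)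
  have hg'eq : ((A,B,C,D) : G4) * (tau m)⁻¹ =
      (A * (mat4 m)⁻¹, B * (mat4 m)⁻¹, C * (mat4 m)⁻¹, D * (mat4 m)⁻¹) := rfl
  rw [hg'eq] at hg'stab
  have hmat' := (fix_iff l1 l2 l3 l4 _).1 hg'stab
  have kc' := keyCommute (Sexp l1 l2 l3 l4) Gm _ _ (hSsym l1 l2 l3 l4)
    (horth (A * (mat4 m)⁻¹) (B * (mat4 m)⁻¹))
    (horth (C * (mat4 m)⁻¹) (D * (mat4 m)⁻¹)) hmat'
  rw [hNval] at kc'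
  obtain ⟨g1,g2,g3,g4,g5,g6,g7,g8,g9,g10,g11,g12⟩ :=
    extract12 l1 l2 l3 l4 ((C * (mat4 m)⁻¹ : SL2):M2) ((D * (mat4 m)⁻¹ : SL2):M2)
      hb hd hq1 hq2 hq3 hq4 kc'.2
  obtain ⟨m2, x3, x4, hx3, hx4, hC, hD⟩ :=
    classify _ _ (sl2_det (C * (mat4 m)⁻¹)) (sl2_det (D * (mat4 m)⁻¹))
      g1 g2 g3 g4 g5 g6 g7 g8 g9 g10 g11 g12
  have hA1 : ((A * (mat4 m)⁻¹ : SL2) : M2) = x1 • 1 := by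
    rw [Matrix.SpecialLinearGroup.coe_mul, hA, smul_mul_assoc, ← coe_mat4,
      ← Matrix.SpecialLinearGroup.coe_mul, mul_inv_cancel,
      Matrix.SpecialLinearGroup.coe_one]
  have hB1 : ((B * (mat4 m)⁻¹ : SL2) : M2) = x2 • 1 := by
    rw [Matrix.SpecialLinearGroup.coe_mul, hB, smul_mul_assoc, ← coe_mat4,
      ← Matrix.SpecialLinearGroup.coe_mul, mul_inv_cancel,
      Matrix.SpecialLinearGroup.coe_one]
  rw [hA1, hB1, hC, hD] at hmat'
  obtain ⟨hm2, hprod⟩ := final_link l1 l2 l3 l4 h1 h3 hgen m2 x1 x2 x3 x4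
    hx1 hx2 hx3 hx4 hmat'
  subst hm2
  have hC1 : ((C * (mat4 m)⁻¹ : SL2) : M2) = x3 • 1 := by rw [hC]; norm_num [mmat]
  have hD1 : ((D * (mat4 m)⁻¹ : SL2) : M2) = x4 • 1 := by rw [hD]; norm_num [mmat]
  obtain ⟨b1, hb1, hxb1⟩ := scalar_to_sg _ _ hx1 hA1
  obtain ⟨b2, hb2, hxb2⟩ := scalar_to_sg _ _ hx2 hB1
  obtain ⟨b3, hb3, hxb3⟩ := scalar_to_sg _ _ hx3 hC1
  obtain ⟨b4, hb4, hxb4⟩ := scalar_to_sg _ _ hx4 hD1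
  rw [hxb1, hxb2, hxb3, hxb4] at hprod
  have hb4' : b4 = xor b1 (xor b2 b3) := bool_prod b1 b2 b3 b4 hprod
  refine ⟨(m, b1, b2, b3), ?_⟩
  have eA : A = sg b1 * mat4 m := by rw [← hb1, inv_mul_cancel_right]
  have eB : B = sg b2 * mat4 m := by rw [← hb2, inv_mul_cancel_right]
  have eC : C = sg b3 * mat4 m := by rw [← hb3, inv_mul_cancel_right]
  have eD : D = sg (xor b1 (xor b2 b3)) * mat4 m := by
    rw [← hb4', ← hb4, inv_mul_cancel_right]
  rw [eA, eB, eC, eD]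
  rfl

/-- For generic `λ`, the stabiliser in `SL(2,ℂ)⁴` of
`s = λ₁u₁ + λ₂u₂ + λ₃u₃ + λ₄u₄` is the group generated by `(J,J,J,J)`, `(-I,-I,I,I)`,
`(-I,I,-I,I)`, `(K,K,K,K)`, which is finite of order 32. -/
theorem stabiliser_generic_semisimple (lam1 lam2 lam3 lam4 : ℂ)
    (h1 : lam1 ≠ 0) (h2 : lam2 ≠ 0) (h3 : lam3 ≠ 0) (h4 : lam4 ≠ 0)
    (hgen : ∀ e2 e3 e4 : ℂ, (e2 = 1 ∨ e2 = -1) → (e3 = 1 ∨ e3 = -1) →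
      (e4 = 1 ∨ e4 = -1) → lam1 ≠ e2 * lam2 + e3 * lam3 + e4 * lam4) :
    {g : G4 | act g (lam1 • u1 + lam2 • u2 + lam3 • u3 + lam4 • u4) =
        lam1 • u1 + lam2 • u2 + lam3 • u3 + lam4 • u4} =
      ↑(Subgroup.closure ({(Jm, Jm, Jm, Jm), (negI, negI, 1, 1), (negI, 1, negI, 1),
        (Km, Km, Km, Km)} : Set G4)) ∧
    Nat.card (Subgroup.closure ({(Jm, Jm, Jm, Jm), (negI, negI, 1, 1), (negI, 1, negI, 1),
        (Km, Km, Km, Km)} : Set G4)) = 32 := by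
  have hsetgens : ({(Jm, Jm, Jm, Jm), (negI, negI, 1, 1), (negI, 1, negI, 1),
      (Km, Km, Km, Km)} : Set G4) = gens := rfl
  rw [hsetgens]
  have hset : {g : G4 | act g (lam1 • u1 + lam2 • u2 + lam3 • u3 + lam4 • u4) =
      lam1 • u1 + lam2 • u2 + lam3 • u3 + lam4 • u4} = ↑(Subgroup.closure gens) := by
    ext g
    constructor
    · intro hg
      obtain ⟨p, rfl⟩ := stab_sub lam1 lam2 lam3 lam4 h1 h2 h3 h4 hgen g hg
      exact f32_mem p
    · intro hg
      exact closure_le_stab lam1 lam2 lam3 lam4 hg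
  refine ⟨hset, ?_⟩
  have hrange : (↑(Subgroup.closure gens) : Set G4) = Set.range f32 := by
    rw [← hset]
    ext g
    constructor
    · intro hg
      obtain ⟨p, rfl⟩ := stab_sub lam1 lam2 lam3 lam4 h1 h2 h3 h4 hgen g hg
      exact ⟨p, rfl⟩
    · rintro ⟨p, rfl⟩
      exact closure_le_stab lam1 lam2 lam3 lam4 (f32_mem p)
  calc Nat.card (Subgroup.closure gens) = Nat.card (Set.range f32) :=
        Nat.card_congr (Equiv.setCongr hrange)
    _ = Nat.card (Fin 4 × Bool × Bool × Bool) := Nat.card_range_of_injective f32_inj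
    _ = 32 := by simp [Nat.card_eq_fintype_card]
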